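/- Let A be a positivity-preserving bounded self-adjoint operator on L²(M, 𝔐, λ). If ‖A‖ is an eigenvalue of A, then there exists a normalized non-negative eigenfunction of A with eigenvalue ‖A‖. -/

import Mathlib

open MeasureTheory

set_option maxHeartbeats 1000000

private lemma inner_nonneg_of_ae {M : Type*} [MeasurableSpace M] {lam : Measure M}
    (u v : Lp ℝ 2 lam) (hu : 0 ≤ᵐ[lam] ⇑u) (hv : 0 ≤ᵐ[lam] ⇑v) :
    0 ≤ (inner ℝ u v : ℝ) := by
  rw [L2.inner_def]
  refine integral_nonneg_of_ae ?_
  filter_upwards [hu, hv] with a ha hb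
  simpa using mul_nonneg hb ha

/-- a positivity-preserving bounded self-adjoint operator `A` on
`L²(M, λ)` that has `‖A‖` as an eigenvalue admits a normalized non-negative
eigenfunction with eigenvalue `‖A‖`. -/
theorem stmt_19 {M : Type*} [MeasurableSpace M] (lam : Measure M)
    (A : Lp ℝ 2 lam →L[ℝ] Lp ℝ 2 lam) (hA : IsSelfAdjoint A)
    (hpos : ∀ f : Lp ℝ 2 lam, 0 ≤ᵐ[lam] ⇑f → 0 ≤ᵐ[lam] ⇑(A f))
    (f : Lp ℝ 2 lam) (hf : f ≠ 0) (hef : A f = ‖A‖ • f) :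
    ∃ g : Lp ℝ 2 lam, ‖g‖ = 1 ∧ (0 ≤ᵐ[lam] ⇑g) ∧ A g = ‖A‖ • g := by
  classical
  obtain ⟨p, n, hpn0, hnn0, hsum, hdiff⟩ :
      ∃ p n : Lp ℝ 2 lam, 0 ≤ p ∧ 0 ≤ n ∧ p + n = |f| ∧ p - n = f :=
    ⟨f⁺, f⁻, posPart_nonneg f, negPart_nonneg f, posPart_add_negPart f,
      posPart_sub_negPart f⟩
  have key1 : (inner ℝ f (A f) : ℝ) = ‖A‖ * ‖f‖ ^ 2 := by
    rw [hef, real_inner_smul_right, real_inner_self_eq_norm_sq]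
  have expand : (inner ℝ |f| (A |f|) : ℝ)
      = inner ℝ f (A f) + 2 * inner ℝ p (A n) + 2 * inner ℝ n (A p) := by
    rw [← hsum, ← hdiff]
    simp only [map_add, map_sub, inner_add_left, inner_add_right, inner_sub_left,
      inner_sub_right]
    ring
  have h1 : 0 ≤ (inner ℝ p (A n) : ℝ) :=
    inner_nonneg_of_ae _ _ ((Lp.coeFn_nonneg _).2 hpn0)
      (hpos _ ((Lp.coeFn_nonneg _).2 hnn0))
  have h2 : 0 ≤ (inner ℝ n (A p) : ℝ) :=
    inner_nonneg_of_ae _ _ ((Lp.coeFn_nonneg _).2 hnn0)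
      (hpos _ ((Lp.coeFn_nonneg _).2 hpn0))
  have hlow : ‖A‖ * ‖f‖ ^ 2 ≤ (inner ℝ |f| (A |f|) : ℝ) := by
    rw [expand, key1]; linarith
  have hup : (inner ℝ |f| (A |f|) : ℝ) ≤ ‖A‖ * ‖f‖ ^ 2 := by
    calc (inner ℝ |f| (A |f|) : ℝ) ≤ ‖(|f| : Lp ℝ 2 lam)‖ * ‖A |f|‖ :=
          real_inner_le_norm _ _
      _ ≤ ‖(|f| : Lp ℝ 2 lam)‖ * (‖A‖ * ‖(|f| : Lp ℝ 2 lam)‖) :=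
          mul_le_mul_of_nonneg_left (A.le_opNorm _) (norm_nonneg _)
      _ = ‖A‖ * ‖f‖ ^ 2 := by rw [norm_abs_eq_norm]; ring
  have heq : (inner ℝ |f| (A |f|) : ℝ) = ‖A‖ * ‖(|f| : Lp ℝ 2 lam)‖ ^ 2 := by
    rw [norm_abs_eq_norm]; exact le_antisymm hup hlow
  have hAh : A |f| = ‖A‖ • |f| := by
    have hb : ‖A |f|‖ ^ 2 ≤ (‖A‖ * ‖(|f| : Lp ℝ 2 lam)‖) ^ 2 :=
      pow_le_pow_left₀ (norm_nonneg _) (A.le_opNorm _) 2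
    have hz : ‖A |f| - ‖A‖ • |f|‖ ^ 2 ≤ 0 := by
      rw [norm_sub_sq_real, real_inner_smul_right, real_inner_comm, heq, norm_smul,
        Real.norm_eq_abs, abs_of_nonneg (norm_nonneg A)]
      nlinarith [hb]
    have hz' : ‖A |f| - ‖A‖ • |f|‖ = 0 := by
      nlinarith [norm_nonneg (A |f| - ‖A‖ • |f|)]
    rw [← sub_eq_zero]
    exact norm_eq_zero.1 hz'
  have hfn : ‖f‖ ≠ 0 := norm_ne_zero_iff.2 hf
  refine ⟨‖f‖⁻¹ • |f|, ?_, ?_, ?_⟩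
  · rw [norm_smul, norm_abs_eq_norm, norm_inv, Real.norm_eq_abs,
      abs_of_nonneg (norm_nonneg f), inv_mul_cancel₀ hfn]
  · filter_upwards [Lp.coeFn_smul (‖f‖⁻¹) (|f| : Lp ℝ 2 lam),
      (Lp.coeFn_nonneg (|f| : Lp ℝ 2 lam)).2 (abs_nonneg f)] with a ha hb
    rw [ha]
    exact smul_nonneg (inv_nonneg.2 (norm_nonneg f)) hb
  · have hms : A (‖f‖⁻¹ • |f|) = ‖f‖⁻¹ • A |f| :=
      A.map_smul (‖f‖⁻¹) (|f| : Lp ℝ 2 lam)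
    rw [hms, hAh, smul_comm]
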